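/- Asymptotic expansion of the Laplace double-layer operator (Lemma 3.2): for μ ∈ C²(𝕋), the operator K^L[μ](s) = ∫_{0}^{2π} K^L(s,t;ε) μ(t) dt satisfies K^L[μ](s) = -(1/2) μ(π-s) - (ε/(2π)) ∫_{-π}^{π} E_{π-s}[μ](t) dt + o(ε) as ε → 0⁺, uniformly in s. -/

import Mathlib

open Real MeasureTheory

lemma Dpos {ε : ℝ} (h1 : 0 < ε) (h2 : ε < 1) (u : ℝ) :
    0 < 1 + ε ^ 2 - (1 - ε ^ 2) * Real.cos u := by
  nlinarith [mul_le_mul_of_nonneg_left (Real.cos_le_one u)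
    (by nlinarith : (0:ℝ) ≤ 1 - ε ^ 2)]

lemma qpos {ε : ℝ} (h1 : 0 < ε) (h2 : ε < 1) (u : ℝ) :
    0 < (1 + ε) ^ 2 + (ε ^ 2 - 1) * Real.cos u := by
  nlinarith [mul_le_mul_of_nonneg_left (Real.cos_le_one u)
    (by nlinarith : (0:ℝ) ≤ 1 - ε ^ 2)]

lemma Fderiv {ε : ℝ} (h1 : 0 < ε) (h2 : ε < 1) (u : ℝ) :
    HasDerivAt (fun u => (1 / (2 * ε)) * (u - 2 * Real.arctan
      ((ε ^ 2 - 1) * Real.sin u / ((1 + ε) ^ 2 + (ε ^ 2 - 1) * Real.cos u))))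
      (1 / (1 + ε ^ 2 - (1 - ε ^ 2) * Real.cos u)) u := by
  have hq := qpos h1 h2 u
  have hD := Dpos h1 h2 u
  have hs : HasDerivAt (fun u => (ε ^ 2 - 1) * Real.sin u) ((ε ^ 2 - 1) * Real.cos u) u :=
    (Real.hasDerivAt_sin u).const_mul _
  have hqd : HasDerivAt (fun u => (1 + ε) ^ 2 + (ε ^ 2 - 1) * Real.cos u)
      ((ε ^ 2 - 1) * (-Real.sin u)) u := ((Real.hasDerivAt_cos u).const_mul _).const_add _
  have hg := hs.div hqd (ne_of_gt hq)
  have ha := hg.arctan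
  have hfull := ((hasDerivAt_id u).sub (ha.const_mul 2)).const_mul (1 / (2 * ε))
  refine hfull.congr_deriv (Eq.symm ?_)
  set S := Real.sin u with hSdef
  set C := Real.cos u with hCdef
  have pyth : S ^ 2 = 1 - C ^ 2 := by
    have := Real.sin_sq_add_cos_sq u; rw [← hSdef, ← hCdef] at this; linarith
  set b : ℝ := ε ^ 2 - 1 with hbdef
  set q : ℝ := (1 + ε) ^ 2 + b * C with hqdef
  set D : ℝ := 1 + ε ^ 2 - (1 - ε ^ 2) * C with hDdef
  have hq0 : q ≠ 0 := ne_of_gt hq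
  have hD0 : D ≠ 0 := ne_of_gt hD
  have hden : q ^ 2 + b ^ 2 * S ^ 2 > 0 := by positivity
  have hg2 : (0:ℝ) < 1 + (b * S / q) ^ 2 := by positivity
  have e1 : 1 / (1 + (b * S / q) ^ 2) * ((b * C * q - b * S * (b * -S)) / q ^ 2)
      = (b * C * q + b ^ 2 * S ^ 2) / (q ^ 2 + b ^ 2 * S ^ 2) := by
    field_simp
    ring
  have den_eq : q ^ 2 + b ^ 2 * S ^ 2 = 2 * (1 + ε) ^ 2 * D := by
    linear_combination (ε ^ 2 - 1) ^ 2 * pyth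
  have num2 : 2 * (1 + ε) ^ 2 * D - 2 * (b * C * q + b ^ 2 * S ^ 2) = 4 * ε * (1 + ε) ^ 2 := by
    linear_combination (-2 * (ε ^ 2 - 1) ^ 2) * pyth
  show 1 / D = 1 / (2 * ε) * (1 - 2 * (1 / (1 + (b * S / q) ^ 2) *
    ((b * C * q - b * S * (b * -S)) / q ^ 2)))
  rw [e1, den_eq]
  have h1ε : (1 + ε) ≠ 0 := by positivity
  have e2 : b * C * q + b ^ 2 * S ^ 2 = (1 + ε) ^ 2 * D - 2 * ε * (1 + ε) ^ 2 := by
    linarith [num2]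
  rw [e2]
  field_simp
  ring

lemma Jval {ε : ℝ} (h1 : 0 < ε) (h2 : ε < 1) :
    ∫ u in (-π)..π, 1 / (1 + ε ^ 2 - (1 - ε ^ 2) * Real.cos u) = π / ε := by
  have hcont : Continuous fun u => 1 / (1 + ε ^ 2 - (1 - ε ^ 2) * Real.cos u) :=
    continuous_const.div (by continuity) (fun u => ne_of_gt (Dpos h1 h2 u))
  rw [intervalIntegral.integral_eq_sub_of_hasDerivAt (fun u _ => Fderiv h1 h2 u)
    (hcont.intervalIntegrable _ _)]
  simp only [Real.sin_pi, Real.sin_neg, Real.sin_pi, mul_zero, zero_div, Real.arctan_zero,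
    neg_zero]
  field_simp
  ring

lemma secondDiff_bound {μ : ℝ → ℝ} (hμ : ContDiff ℝ 2 μ) {C₂ : ℝ}
    (hC : ∀ y, |deriv (deriv μ) y| ≤ C₂) (x u : ℝ) :
    |μ (x + u) - 2 * μ x + μ (x - u)| ≤ 2 * C₂ * u ^ 2 := by
  have hμ1 : Differentiable ℝ μ := hμ.differentiable two_ne_zero
  have hd1 : ContDiff ℝ 1 (deriv μ) := by
    have h2 : ContDiff ℝ ((1 : ℕ) + 1) μ := by exact_mod_cast hμ
    exact ((contDiff_succ_iff_deriv (n := 1)).mp (by exact_mod_cast h2)).2.2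
  have hμ'diff : Differentiable ℝ (deriv μ) := hd1.differentiable one_ne_zero
  have hcont' : Continuous (deriv μ) := hμ'diff.continuous
  have hC0 : 0 ≤ C₂ := le_trans (abs_nonneg _) (hC 0)
  have lip : ∀ a b : ℝ, |deriv μ a - deriv μ b| ≤ C₂ * |a - b| := by
    intro a b
    have := convex_univ.norm_image_sub_le_of_norm_deriv_le
      (f := deriv μ) (fun y _ => hμ'diff y)
      (fun y _ => by simpa [Real.norm_eq_abs] using hC y) (Set.mem_univ b) (Set.mem_univ a)
    simpa [Real.norm_eq_abs] using this
  have hG : ∀ v : ℝ, HasDerivAt (fun w => μ (x + w) + μ (x - w))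
      (deriv μ (x + v) - deriv μ (x - v)) v := by
    intro v
    have a1 : HasDerivAt (fun w : ℝ => μ (x + w)) (deriv μ (x + v) * 1) v :=
      ((hμ1 (x + v)).hasDerivAt).comp v ((hasDerivAt_id v).const_add x)
    have a2 : HasDerivAt (fun w : ℝ => μ (x - w)) (deriv μ (x - v) * (-1)) v :=
      ((hμ1 (x - v)).hasDerivAt).comp v ((hasDerivAt_id v).const_sub x)
    have := a1.add a2
    simpa [mul_comm, sub_eq_add_neg, Pi.add_def] using this
  have hicont : Continuous fun v => deriv μ (x + v) - deriv μ (x - v) :=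
    (hcont'.comp (continuous_const.add continuous_id)).sub
      (hcont'.comp (continuous_const.sub continuous_id))
  have key : μ (x + u) + μ (x - u) - 2 * μ x
      = ∫ v in (0:ℝ)..u, (deriv μ (x + v) - deriv μ (x - v)) := by
    rw [intervalIntegral.integral_eq_sub_of_hasDerivAt (fun v _ => hG v)
      (hicont.intervalIntegrable _ _)]
    simp
    ring
  have hb : |∫ v in (0:ℝ)..u, (deriv μ (x + v) - deriv μ (x - v))| ≤ 2 * C₂ * |u| * |u - 0| := by
    rw [← Real.norm_eq_abs]
    apply intervalIntegral.norm_integral_le_of_norm_le_const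
    intro v hv
    have hvu : |v| ≤ |u| := by
      have h1 := le_abs_self u
      have h2 := neg_abs_le u
      rw [Set.uIoc_eq_union] at hv
      rcases hv with hv | hv <;> rcases hv with ⟨h3, h4⟩ <;>
        exact abs_le.mpr ⟨by linarith, by linarith⟩
    have := lip (x + v) (x - v)
    have e : |(x + v) - (x - v)| = 2 * |v| := by
      rw [show (x + v) - (x - v) = 2 * v by ring, abs_mul]
      norm_num
    rw [Real.norm_eq_abs]
    rw [e] at this
    nlinarith
  have : |μ (x + u) + μ (x - u) - 2 * μ x| ≤ 2 * C₂ * u ^ 2 := by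
    rw [key]
    calc _ ≤ 2 * C₂ * |u| * |u - 0| := hb
    _ = 2 * C₂ * u ^ 2 := by rw [sub_zero, mul_assoc, abs_mul_abs_self]; ring
  calc |μ (x + u) - 2 * μ x + μ (x - u)| = |μ (x + u) + μ (x - u) - 2 * μ x| := by ring_nf
  _ ≤ 2 * C₂ * u ^ 2 := this

lemma d2cont {μ : ℝ → ℝ} (hμ : ContDiff ℝ 2 μ) : Continuous (deriv (deriv μ)) := by
  have hd1 : ContDiff ℝ 1 (deriv μ) :=
    ((contDiff_succ_iff_deriv (n := 1)).mp (by exact_mod_cast hμ)).2.2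
  exact (((contDiff_succ_iff_deriv (n := 0)).mp (by exact_mod_cast hd1)).2.2).continuous

lemma periodic_deriv' {f : ℝ → ℝ} (hf : Function.Periodic f (2 * π)) :
    Function.Periodic (deriv f) (2 * π) := by
  intro y
  have : (fun x => f (x + 2 * π)) = f := funext fun x => hf x
  calc deriv f (y + 2 * π) = deriv (fun x => f (x + 2 * π)) y :=
        (deriv_comp_add_const f (2 * π) y).symm
  _ = deriv f y := by rw [this]

lemma bdd_of_per {f : ℝ → ℝ} (hf : Continuous f) (hp : Function.Periodic f (2 * π)) :
    ∃ C, 0 ≤ C ∧ ∀ y, |f y| ≤ C := by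
  obtain ⟨C, hC⟩ := (isCompact_Icc (a := (0:ℝ)) (b := 2 * π)).exists_bound_of_continuousOn
    hf.continuousOn
  refine ⟨C, le_trans (norm_nonneg _) (hC 0 ⟨le_refl 0, by positivity⟩), fun y => ?_⟩
  obtain ⟨z, hz, hzy⟩ := hp.exists_mem_Ico₀ (by positivity) y
  rw [hzy]
  simpa [Real.norm_eq_abs] using hC z ⟨hz.1, hz.2.le⟩

lemma splitdiv (a b c d : ℝ) (hd : d ≠ 0) :
    a / d = b * (1 / d) + ((a - 2 * b + c) / 2) / d + ((a - c) / 2) / d := by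
  field_simp
  ring

set_option maxHeartbeats 2000000 in
/-- Lemma 3.2 (asymptotic expansion of the Laplace double-layer operator):
for `μ ∈ C²(𝕋)`,
`∫₀^{2π} K^L(s,t;ε) μ(t) dt = -(1/2) μ(π-s) - (ε/(2π)) ∫_{-π}^{π} E_{π-s}[μ](t) dt + o(ε)`
as `ε → 0⁺`, uniformly in `s`. -/
theorem stmt_16 (μ : ℝ → ℝ) (hμ : ContDiff ℝ 2 μ)
    (hper : Function.Periodic μ (2 * π)) (E : ℝ → ℝ → ℝ)
    (hE_ne : ∀ x t, Real.cos t ≠ 1 →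
      E x t = (μ (x + t) - 2 * μ x + μ (x - t)) / (2 * (1 - Real.cos t)))
    (hE_eq : ∀ x t, Real.cos t = 1 → E x t = deriv (deriv μ) x) :
    ∀ c : ℝ, 0 < c → ∃ ε₀ : ℝ, 0 < ε₀ ∧ ∀ ε : ℝ, 0 < ε → ε < ε₀ → ∀ s : ℝ,
      |(∫ t in (0:ℝ)..(2 * π),
          (-(1 / (2 * π)) * ε / (1 + ε ^ 2 + (1 - ε ^ 2) * Real.cos (s + t))) * μ t)
        - (-(1 / 2) * μ (π - s)
            - ε / (2 * π) * ∫ t in (-π)..π, E (π - s) t)| ≤ c * ε := by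
  have hμ1 : Differentiable ℝ μ := hμ.differentiable two_ne_zero
  have hμc : Continuous μ := hμ1.continuous
  obtain ⟨C₂, hC₂0, hC₂⟩ := bdd_of_per (d2cont hμ) (periodic_deriv' (periodic_deriv' hper))
  set M : ℝ := C₂ * π ^ 2 / 2 + 1 with hMdef
  have hπ : (0:ℝ) < π := Real.pi_pos
  have hM : 0 < M := by positivity
  have hC₂M : C₂ ≤ M := by
    rw [hMdef]
    nlinarith [mul_nonneg hC₂0 (by nlinarith [Real.pi_gt_three] : (0:ℝ) ≤ π ^ 2 / 2 - 1)]
  intro c hc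
  refine ⟨min 1 (c / M), by positivity, fun ε hε hεlt s => ?_⟩
  have hε1 : ε < 1 := lt_of_lt_of_le hεlt (min_le_left _ _)
  have hεcM : ε < c / M := lt_of_lt_of_le hεlt (min_le_right _ _)
  set x : ℝ := π - s with hxdef
  set D : ℝ → ℝ := fun u => 1 + ε ^ 2 - (1 - ε ^ 2) * Real.cos u with hDdef
  have hDpos : ∀ u, 0 < D u := fun u => Dpos hε hε1 u
  have hDne : ∀ u, D u ≠ 0 := fun u => ne_of_gt (hDpos u)
  have hDcont : Continuous D := by
    rw [hDdef]; exact continuous_const.sub (continuous_const.mul Real.continuous_cos)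
  have hJ : ∫ u in (-π)..π, 1 / D u = π / ε := by
    simp only [hDdef]; exact Jval hε hε1
  set N : ℝ → ℝ := fun u => (μ (x + u) - 2 * μ x + μ (x - u)) / 2 with hNdef
  have hNcont : Continuous N := by
    rw [hNdef]
    exact (((hμc.comp (continuous_const.add continuous_id)).sub continuous_const).add
      (hμc.comp (continuous_const.sub continuous_id))).div_const 2
  -- Step A : rewrite the LHS integral
  have e0 : ∀ t : ℝ, (-(1 / (2 * π)) * ε / (1 + ε ^ 2 + (1 - ε ^ 2) * Real.cos (s + t))) * μ t
      = -(ε / (2 * π)) * (μ t / D (t - x)) := by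
    intro t
    have hden : 1 + ε ^ 2 + (1 - ε ^ 2) * Real.cos (s + t) = D (t - x) := by
      rw [show s + t = (t - x) + π by rw [hxdef]; ring, Real.cos_add_pi, hDdef]
      ring
    rw [hden]
    ring
  have stepA : (∫ t in (0:ℝ)..(2 * π),
      (-(1 / (2 * π)) * ε / (1 + ε ^ 2 + (1 - ε ^ 2) * Real.cos (s + t))) * μ t)
      = -(ε / (2 * π)) * ∫ u in (-π)..π, μ (x + u) / D u := by
    rw [intervalIntegral.integral_congr (g := fun t => -(ε / (2 * π)) * (μ t / D (t - x)))
      (fun t _ => e0 t)]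
    rw [intervalIntegral.integral_const_mul]
    congr 1
    have ecv : (∫ t in (0:ℝ)..(2 * π), μ t / D (t - x))
        = ∫ u in (-x)..(2 * π - x), μ (u + x) / D u := by
      have h := intervalIntegral.integral_comp_add_right (a := -x) (b := 2 * π - x)
        (fun t => μ t / D (t - x)) x
      simp only [add_sub_cancel_right] at h
      rw [show -x + x = (0:ℝ) by ring, show 2 * π - x + x = 2 * π by ring] at h
      exact h.symm
    have hgper : Function.Periodic (fun u => μ (u + x) / D u) (2 * π) := by
      intro u
      simp only
      rw [show u + 2 * π + x = (u + x) + 2 * π by ring, hper (u + x), hDdef]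
      simp [Real.cos_add_two_pi]
    have eper : (∫ u in (-x)..(2 * π - x), μ (u + x) / D u)
        = ∫ u in (-π)..π, μ (u + x) / D u := by
      have h := hgper.intervalIntegral_add_eq (-x) (-π)
      rw [show -x + 2 * π = 2 * π - x by ring, show -π + 2 * π = π by ring] at h
      exact h
    rw [ecv, eper]
    exact intervalIntegral.integral_congr (fun u _ => by rw [add_comm])
  -- Step B : split the integral
  have hHodd : (∫ u in (-π)..π, ((μ (x + u) - μ (x - u)) / 2) / D u) = 0 := by
    set φ : ℝ → ℝ := fun u => ((μ (x + u) - μ (x - u)) / 2) / D u with hφdef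
    have hodd : ∀ u, φ (-u) = -φ u := by
      intro u
      rw [hφdef]
      simp only
      rw [show x + -u = x - u by ring, show x - -u = x + u by ring, hDdef]
      simp only [Real.cos_neg]
      ring
    have h1 : (∫ u in (-π)..π, φ (-u)) = ∫ u in (-π)..π, φ u := by
      rw [intervalIntegral.integral_comp_neg]
      norm_num
    have h2 : (∫ u in (-π)..π, φ (-u)) = -∫ u in (-π)..π, φ u := by
      rw [intervalIntegral.integral_congr (g := fun u => -φ u) (fun u _ => hodd u)]
      exact intervalIntegral.integral_neg
    linarith [h1.symm.trans h2]
  have hint1 : IntervalIntegrable (fun u => μ x * (1 / D u)) volume (-π) π :=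
    (continuous_const.mul (continuous_const.div hDcont hDne)).intervalIntegrable _ _
  have hint2 : IntervalIntegrable (fun u => N u / D u) volume (-π) π :=
    (hNcont.div hDcont hDne).intervalIntegrable _ _
  have hint3 : IntervalIntegrable (fun u => ((μ (x + u) - μ (x - u)) / 2) / D u) volume (-π) π :=
    ((((hμc.comp (continuous_const.add continuous_id)).sub
      (hμc.comp (continuous_const.sub continuous_id))).div_const 2).div hDcont
        hDne).intervalIntegrable _ _
  have stepB : (∫ u in (-π)..π, μ (x + u) / D u)
      = μ x * (π / ε) + ∫ u in (-π)..π, N u / D u := by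
    have hsplit : ∀ u, μ (x + u) / D u
        = μ x * (1 / D u) + N u / D u + ((μ (x + u) - μ (x - u)) / 2) / D u := by
      intro u
      rw [hNdef]
      exact splitdiv (μ (x + u)) (μ x) (μ (x - u)) (D u) (hDne u)
    rw [intervalIntegral.integral_congr
      (g := fun u => μ x * (1 / D u) + N u / D u + ((μ (x + u) - μ (x - u)) / 2) / D u)
      (fun u _ => hsplit u)]
    rw [intervalIntegral.integral_add (hint1.add hint2) hint3,
      intervalIntegral.integral_add hint1 hint2, hHodd, intervalIntegral.integral_const_mul, hJ]
    ring
  have stepC : (∫ t in (0:ℝ)..(2 * π),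
      (-(1 / (2 * π)) * ε / (1 + ε ^ 2 + (1 - ε ^ 2) * Real.cos (s + t))) * μ t)
      = -(1 / 2) * μ x - ε / (2 * π) * ∫ u in (-π)..π, N u / D u := by
    rw [stepA, stepB]
    have hεne : ε ≠ 0 := ne_of_gt hε
    have hπne : π ≠ 0 := ne_of_gt hπ
    field_simp
    ring
  -- boundedness and measurability of E x
  have hNbd := fun u => secondDiff_bound hμ hC₂ x u
  have hEbound : ∀ u ∈ Set.Icc (-π) π, |E x u| ≤ M := by
    intro u hu
    by_cases h : Real.cos u = 1
    · rw [hE_eq x u h]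
      exact le_trans (hC₂ x) hC₂M
    · rw [hE_ne x u h]
      have hcos : Real.cos u ≤ 1 - 2 / π ^ 2 * u ^ 2 :=
        Real.cos_le_one_sub_mul_cos_sq (abs_le.mpr ⟨hu.1, hu.2⟩)
      have hπ2 : (0:ℝ) < π ^ 2 := by positivity
      have h2 : 2 * u ^ 2 ≤ (1 - Real.cos u) * π ^ 2 := by
        calc 2 * u ^ 2 = (2 / π ^ 2 * u ^ 2) * π ^ 2 := by field_simp
        _ ≤ (1 - Real.cos u) * π ^ 2 :=
            mul_le_mul_of_nonneg_right (by linarith) (le_of_lt hπ2)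
      have hu0 : u ≠ 0 := fun h0 => h (by simp [h0])
      have hu2 : (0:ℝ) < u ^ 2 := by positivity
      have hpos : 0 < 1 - Real.cos u := by nlinarith
      rw [abs_div, abs_of_pos (by linarith : (0:ℝ) < 2 * (1 - Real.cos u)),
        div_le_iff₀ (by linarith : (0:ℝ) < 2 * (1 - Real.cos u))]
      rw [hMdef]
      nlinarith [hNbd u, mul_le_mul_of_nonneg_left h2 hC₂0, hpos, mul_nonneg hC₂0 hpos.le]
  have hEfun : E x = fun u => if Real.cos u = 1 then deriv (deriv μ) x
      else (μ (x + u) - 2 * μ x + μ (x - u)) / (2 * (1 - Real.cos u)) := by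
    funext u
    by_cases h : Real.cos u = 1
    · simp [h, hE_eq x u h]
    · simp [h, hE_ne x u h]
  have hEmeas : Measurable (E x) := by
    rw [hEfun]
    refine Measurable.ite (isClosed_eq Real.continuous_cos continuous_const).measurableSet
      measurable_const ?_
    exact ((((hμc.comp (continuous_const.add continuous_id)).sub continuous_const).add
      (hμc.comp (continuous_const.sub continuous_id))).measurable).div
      ((continuous_const.mul (continuous_const.sub Real.continuous_cos)).measurable)
  have hEint : IntervalIntegrable (E x) volume (-π) π := by
    rw [intervalIntegrable_iff]
    have hgconst : IntegrableOn (fun _ : ℝ => M) (Set.uIoc (-π) π) volume :=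
      intervalIntegrable_iff.mp (intervalIntegrable_const)
    apply Integrable.mono' hgconst hEmeas.aestronglyMeasurable
    refine (ae_restrict_iff' measurableSet_uIoc).mpr (ae_of_all _ fun u hu => ?_)
    rw [Set.uIoc_of_le (by linarith : -π ≤ π)] at hu
    exact (by simpa [Real.norm_eq_abs] using hEbound u ⟨le_of_lt hu.1, hu.2⟩)
  -- the a.e. pointwise bound
  have hnull : (volume {u : ℝ | Real.cos u = 1}) = 0 := by
    refine measure_mono_null (fun u hu => ?_) ((Set.countable_range
      (fun n : ℤ => (n : ℝ) * (2 * π))).measure_zero _)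
    obtain ⟨n, hn⟩ := (Real.cos_eq_one_iff u).mp hu
    exact ⟨n, hn⟩
  have hae0 : ∀ᵐ u : ℝ ∂volume, Real.cos u ≠ 1 := by
    rw [MeasureTheory.ae_iff]
    simpa using hnull
  have haeptw : ∀ u, Real.cos u ≠ 1 → u ∈ Set.Icc (-π) π →
      |E x u - N u / D u| ≤ 2 * M * ε ^ 2 * (1 / D u) := by
    intro u hu1 hu2
    have hcosne : Real.cos u < 1 := lt_of_le_of_ne (Real.cos_le_one u) hu1
    have h1c : 0 < 1 - Real.cos u := by linarith
    have hfe : E x u - N u / D u = (E x u) * (ε ^ 2 * (1 + Real.cos u) / D u) := by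
      rw [hE_ne x u hu1, hNdef, hDdef]
      simp only
      rw [div_sub_div _ _ (by positivity : 2 * (1 - Real.cos u) ≠ 0)
        (by simpa [hDdef] using hDne u), div_mul_div_comm, div_eq_div_iff]
      · ring
      · exact mul_ne_zero (by positivity) (by simpa [hDdef] using hDne u)
      · exact mul_ne_zero (by positivity) (by simpa [hDdef] using hDne u)
    rw [hfe, abs_mul]
    have hcge : -1 ≤ Real.cos u := Real.neg_one_le_cos u
    have h2 : |ε ^ 2 * (1 + Real.cos u) / D u| ≤ 2 * ε ^ 2 * (1 / D u) := by
      rw [abs_of_nonneg (div_nonneg (by nlinarith : (0:ℝ) ≤ ε ^ 2 * (1 + Real.cos u))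
        (hDpos u).le)]
      rw [div_le_iff₀ (hDpos u)]
      have he : 2 * ε ^ 2 * (1 / D u) * D u = 2 * ε ^ 2 := by
        calc 2 * ε ^ 2 * (1 / D u) * D u = 2 * ε ^ 2 * (D u / D u) := by ring
        _ = 2 * ε ^ 2 := by rw [div_self (hDne u), mul_one]
      rw [he]
      nlinarith [Real.cos_le_one u, sq_nonneg ε]
    calc |E x u| * |ε ^ 2 * (1 + Real.cos u) / D u| ≤ M * (2 * ε ^ 2 * (1 / D u)) :=
        mul_le_mul (hEbound u hu2) h2 (abs_nonneg _) (le_of_lt hM)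
    _ = 2 * M * ε ^ 2 * (1 / D u) := by ring
  have hdiffint : IntervalIntegrable (fun u => E x u - N u / D u) volume (-π) π :=
    hEint.sub hint2
  have hbddint : IntervalIntegrable (fun u => 2 * M * ε ^ 2 * (1 / D u)) volume (-π) π :=
    (continuous_const.mul (continuous_const.div hDcont hDne)).intervalIntegrable _ _
  have hintbound : |∫ u in (-π)..π, (E x u - N u / D u)| ≤ 2 * M * ε ^ 2 * (π / ε) := by
    have hab : -π ≤ π := by linarith
    calc |∫ u in (-π)..π, (E x u - N u / D u)|
        ≤ ∫ u in (-π)..π, |E x u - N u / D u| :=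
          intervalIntegral.abs_integral_le_integral_abs hab
    _ ≤ ∫ u in (-π)..π, 2 * M * ε ^ 2 * (1 / D u) := by
        apply intervalIntegral.integral_mono_ae_restrict hab hdiffint.abs hbddint
        refine ((ae_restrict_of_ae hae0).and (ae_restrict_mem measurableSet_Icc)).mono ?_
        intro u hu12
        exact haeptw u hu12.1 hu12.2
    _ = 2 * M * ε ^ 2 * (π / ε) := by
        rw [intervalIntegral.integral_const_mul, hJ]
  -- final assembly
  rw [stepC]
  have hfinal : (-(1 / 2) * μ x - ε / (2 * π) * ∫ u in (-π)..π, N u / D u)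
      - (-(1 / 2) * μ (π - s) - ε / (2 * π) * ∫ t in (-π)..π, E (π - s) t)
      = ε / (2 * π) * ∫ u in (-π)..π, (E x u - N u / D u) := by
    rw [intervalIntegral.integral_sub hEint hint2, ← hxdef]
    ring
  rw [hfinal, abs_mul, abs_of_pos (by positivity : (0:ℝ) < ε / (2 * π))]
  calc ε / (2 * π) * |∫ u in (-π)..π, (E x u - N u / D u)|
      ≤ ε / (2 * π) * (2 * M * ε ^ 2 * (π / ε)) :=
        mul_le_mul_of_nonneg_left hintbound (by positivity)
  _ = M * ε * ε := by field_simp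
  _ ≤ c * ε := by nlinarith [(lt_div_iff₀ hM).mp hεcM, hε.le]
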